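/- Let R be a commutative noetherian ring and let M, N be R-modules with Supp M ⊆ Supp N. Then M belongs to the hereditary torsion class of the category of all R-modules generated by N; that is, for every isomorphism-invariant predicate T on R-modules closed under submodules, quotient modules, extensions and arbitrary direct sums, if T N holds then T M holds. -/

import Mathlib

universe u

set_option maxHeartbeats 1000000 in
theorem aux_cyclic
    (R : Type u) [CommRing R]
    (N : Type u) [AddCommGroup N] [Module R N]
    (T : ∀ (A : Type u) [AddCommGroup A] [Module R A], Prop)
    (hiso : ∀ (A B : Type u) [AddCommGroup A] [Module R A] [AddCommGroup B] [Module R B],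
      (A ≃ₗ[R] B) → T A → T B)
    (hsub : ∀ (A : Type u) [AddCommGroup A] [Module R A] (B : Submodule R A), T A → T B)
    (hquot : ∀ (A : Type u) [AddCommGroup A] [Module R A] (B : Submodule R A),
      T A → T (A ⧸ B))
    (hN : T N) (p : Ideal R) (x : N) (hx : (R ∙ x).annihilator ≤ p) :
    T (R ⧸ p) := by
  have hker : LinearMap.ker (LinearMap.toSpanSingleton R N x) ≤ p := by
    intro r hr
    exact hx (by rw [Submodule.mem_annihilator_span_singleton]; exact hr)
  have h1 : T (LinearMap.range (LinearMap.toSpanSingleton R N x)) := hsub N _ hN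
  have h2 : T (R ⧸ LinearMap.ker (LinearMap.toSpanSingleton R N x)) :=
    hiso _ _ ((LinearMap.toSpanSingleton R N x).quotKerEquivRange).symm h1
  have h3 : T ((R ⧸ LinearMap.ker (LinearMap.toSpanSingleton R N x)) ⧸
      (Submodule.map (LinearMap.ker (LinearMap.toSpanSingleton R N x)).mkQ p)) := @hquot (R ⧸ LinearMap.ker (LinearMap.toSpanSingleton R N x)) _ _
    (Submodule.map (LinearMap.ker (LinearMap.toSpanSingleton R N x)).mkQ p) h2
  exact hiso _ _
    (Submodule.quotientQuotientEquivQuotient (LinearMap.ker (LinearMap.toSpanSingleton R N x)) p hker) h3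

set_option maxHeartbeats 1000000 in
theorem aux_fg
    (R : Type u) [CommRing R] [IsNoetherianRing R]
    (N : Type u) [AddCommGroup N] [Module R N]
    (T : ∀ (A : Type u) [AddCommGroup A] [Module R A], Prop)
    (hiso : ∀ (A B : Type u) [AddCommGroup A] [Module R A] [AddCommGroup B] [Module R B],
      (A ≃ₗ[R] B) → T A → T B)
    (hsub : ∀ (A : Type u) [AddCommGroup A] [Module R A] (B : Submodule R A), T A → T B)
    (hquot : ∀ (A : Type u) [AddCommGroup A] [Module R A] (B : Submodule R A),
      T A → T (A ⧸ B))
    (hext : ∀ (A B C : Type u) [AddCommGroup A] [Module R A] [AddCommGroup B] [Module R B]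
      [AddCommGroup C] [Module R C] (f : A →ₗ[R] B) (g : B →ₗ[R] C),
      Function.Injective f → Function.Surjective g → LinearMap.range f = LinearMap.ker g →
      T A → T C → T B)
    (hN : T N)
    (M : Type u) [AddCommGroup M] [Module R M] [Module.Finite R M]
    (hsupp : Module.support R M ⊆ Module.support R N) :
    T M := by
  obtain ⟨S, hS, hSmax⟩ :=
    (set_has_maximal_iff_noetherian.mpr (isNoetherian_of_isNoetherianRing_of_finite R M))
      {S : Submodule R M | T S}
      ⟨⊥, hiso (⊥ : Submodule R N) (⊥ : Submodule R M)
        (LinearEquiv.ofSubsingleton _ _) (hsub N ⊥ hN)⟩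
  rcases eq_or_ne S ⊤ with rfl | hne
  · exact hiso _ _ Submodule.topEquiv hS
  · exfalso
    haveI := Submodule.Quotient.nontrivial_iff.mpr hne
    obtain ⟨p, hp⟩ := associatedPrimes.nonempty R (M ⧸ S)
    obtain ⟨hprime, x, hx⟩ := isAssociatedPrime_iff.mp hp
    rw [Submodule.bot_colon'] at hx
    have hx0 : x ≠ 0 := by
      rintro rfl
      rw [Submodule.span_singleton_eq_bot.mpr rfl, Submodule.annihilator_bot] at hx
      exact hprime.ne_top hx
    -- p is in the support of N
    have hpN : (⟨p, hprime⟩ : PrimeSpectrum R) ∈ Module.support R N :=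
      hsupp (Module.support_subset_of_surjective S.mkQ (Submodule.mkQ_surjective S)
        (Module.mem_support_iff_exists_annihilator.mpr ⟨x, hx.ge⟩))
    obtain ⟨y, hy⟩ := Module.mem_support_iff_exists_annihilator.mp hpN
    have hTp : T (R ⧸ p) := aux_cyclic R N T hiso hsub hquot hN p y hy
    -- the preimage S' of R ∙ x
    set S' := Submodule.comap S.mkQ (R ∙ x) with hS'def
    have hSS' : S ≤ S' := fun m hm => by
      have : S.mkQ m = 0 := (Submodule.Quotient.mk_eq_zero S).mpr hm
      simp only [hS'def, Submodule.mem_comap, this]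
      exact Submodule.zero_mem _
    -- the connecting map
    set φ : S' →ₗ[R] M ⧸ S := S.mkQ.comp S'.subtype with hφdef
    have hkerφ : LinearMap.ker φ = Submodule.comap S'.subtype S := by
      rw [hφdef, LinearMap.ker_comp, Submodule.ker_mkQ]
    have hranφ : LinearMap.range φ = R ∙ x := by
      rw [hφdef, LinearMap.range_comp, Submodule.range_subtype]
      exact Submodule.map_comap_eq_self (by rw [Submodule.range_mkQ]; exact le_top)
    have hker2 : LinearMap.ker (LinearMap.toSpanSingleton R (M ⧸ S) x) = p := by
      ext r
      rw [LinearMap.mem_ker, hx, Submodule.mem_annihilator_span_singleton]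
      rfl
    have e3 : (R ⧸ p) ≃ₗ[R] (R ∙ x) :=
      (Submodule.quotEquivOfEq p _ hker2.symm).trans
        ((LinearMap.toSpanSingleton R (M ⧸ S) x).quotKerEquivRange.trans
          (LinearEquiv.ofEq _ _ (LinearMap.span_singleton_eq_range R (M ⧸ S) x).symm))
    have e2 : ((S' : Submodule R M) ⧸ Submodule.comap S'.subtype S) ≃ₗ[R] (R ∙ x) :=
      (Submodule.quotEquivOfEq _ _ hkerφ.symm).trans
        (φ.quotKerEquivRange.trans (LinearEquiv.ofEq _ _ hranφ))
    have hC : T ((S' : Submodule R M) ⧸ Submodule.comap S'.subtype S) :=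
      hiso _ _ (e3.trans e2.symm) hTp
    have hS'T : T S' :=
      hext S S' _ (Submodule.inclusion hSS') (Submodule.comap S'.subtype S).mkQ
        (Submodule.inclusion_injective hSS') (Submodule.mkQ_surjective _)
        (by rw [Submodule.range_inclusion, Submodule.ker_mkQ]) hS hC
    -- contradiction with maximality
    obtain ⟨y', hy'⟩ := Submodule.mkQ_surjective S x
    have hy'S' : y' ∈ S' := by
      simp only [hS'def, Submodule.mem_comap, hy']
      exact Submodule.mem_span_singleton_self x
    have hy'S : y' ∉ S := fun h => hx0 (by rw [← hy']; exact (Submodule.Quotient.mk_eq_zero S).mpr h)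
    exact hSmax S' hS'T (lt_of_le_of_ne hSS' (fun h => hy'S (h ▸ hy'S')))


set_option maxHeartbeats 1000000 in
/-- Over a commutative noetherian ring, if `Supp M ⊆ Supp N` then `M` lies in the
hereditary torsion class of `Mod R` generated by `N`: every isomorphism-invariant
predicate on `R`-modules closed under submodules, quotient modules, extensions and
arbitrary direct sums which contains `N` also contains `M`. -/
theorem mem_torsionClass_generated_of_support_subset
    (R : Type u) [CommRing R] [IsNoetherianRing R]
    (M N : Type u) [AddCommGroup M] [Module R M] [AddCommGroup N] [Module R N]
    (hsupp : Module.support R M ⊆ Module.support R N)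
    (T : ∀ (A : Type u) [AddCommGroup A] [Module R A], Prop)
    (hiso : ∀ (A B : Type u) [AddCommGroup A] [Module R A] [AddCommGroup B] [Module R B],
      (A ≃ₗ[R] B) → T A → T B)
    (hsub : ∀ (A : Type u) [AddCommGroup A] [Module R A] (B : Submodule R A), T A → T B)
    (hquot : ∀ (A : Type u) [AddCommGroup A] [Module R A] (B : Submodule R A),
      T A → T (A ⧸ B))
    (hext : ∀ (A B C : Type u) [AddCommGroup A] [Module R A] [AddCommGroup B] [Module R B]
      [AddCommGroup C] [Module R C] (f : A →ₗ[R] B) (g : B →ₗ[R] C),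
      Function.Injective f → Function.Surjective g → LinearMap.range f = LinearMap.ker g →
      T A → T C → T B)
    (hsum : ∀ (ι : Type u) (A : ι → Type u) [∀ i, AddCommGroup (A i)] [∀ i, Module R (A i)],
      (∀ i, T (A i)) → T (DirectSum ι A))
    (hN : T N) :
    T M := by
  classical
  have hTi : ∀ i : {P : Submodule R M // P.FG}, T i.1 := fun i => by
    haveI : Module.Finite R i.1 := Module.Finite.iff_fg.mpr i.2
    exact aux_fg R N T hiso hsub hquot hext hN i.1
      ((Module.support_subset_of_injective i.1.subtype (Submodule.injective_subtype _)).trans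
        hsupp)
  have hD : T (DirectSum {P : Submodule R M // P.FG} fun i => i.1) :=
    hsum _ _ hTi
  set π : DirectSum {P : Submodule R M // P.FG} (fun i => i.1) →ₗ[R] M :=
    DirectSum.toModule R _ M fun i => i.1.subtype with hπdef
  have hπ : Function.Surjective π := fun m =>
    ⟨DirectSum.lof R _ (fun i : {P : Submodule R M // P.FG} => (i.1 : Type u))
        ⟨R ∙ m, Submodule.fg_span_singleton m⟩ ⟨m, Submodule.mem_span_singleton_self m⟩, by
      rw [hπdef, DirectSum.toModule_lof]; rfl⟩
  exact hiso _ _ (π.quotKerEquivOfSurjective hπ) (hquot _ _ hD)
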